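/- For all integers k, m with 0 ≤ m < k and k ≡ m (mod 2), and every ρ ∈ [0,1], ∫₀^{2π} e^{ikθ} ( √(1 − ρ² sin²θ) + i ρ sin θ )^m dθ = 0. -/

import Mathlib

open MeasureTheory Set Complex intervalIntegral

noncomputable section


lemma expE (n : ℕ) (hn : 0 < n) :
    ∫ θ in (0:ℝ)..(2 * Real.pi), Complex.exp ((n:ℂ) * Complex.I * θ) = 0 := by
  have hc : (n:ℂ) * Complex.I ≠ 0 := by
    simp [Complex.I_ne_zero, hn.ne']
  rw [integral_exp_mul_complex hc]
  have : Complex.exp ((n:ℂ) * Complex.I * (2 * Real.pi)) = 1 := by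
    have := Complex.exp_int_mul_two_pi_mul_I (n : ℤ)
    rw [← this]
    push_cast
    ring_nf
  simp [this]

lemma L1 (k j : ℕ) (hj : j < k) (c : ℝ) :
    ∫ θ in (0:ℝ)..(2 * Real.pi),
      Complex.exp (Complex.I * k * θ) * ((c * Real.sin θ : ℝ) : ℂ) ^ j = 0 := by
  have key : ∀ θ : ℝ, Complex.exp (Complex.I * k * θ) * ((c * Real.sin θ : ℝ) : ℂ) ^ j
      = ∑ l ∈ Finset.range (j + 1),
          ((-1:ℂ)) ^ (l + j) * (j.choose l : ℂ) * c ^ j / (2 * Complex.I) ^ j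
            * Complex.exp (((k - j + 2 * l : ℕ) : ℂ) * Complex.I * θ) := by
    intro θ
    set a := Complex.exp (θ * Complex.I) with ha_def
    have ha : a ≠ 0 := Complex.exp_ne_zero _
    have h1 : Complex.exp (Complex.I * k * θ) = a ^ k := by
      rw [ha_def, ← Complex.exp_nat_mul]; ring_nf
    have hsin : ((Real.sin θ : ℂ)) = (a - a⁻¹) / (2 * Complex.I) := by
      rw [Complex.ofReal_sin, show Complex.sin ↑θ
        = (Complex.exp (-↑θ * Complex.I) - Complex.exp (↑θ * Complex.I)) * Complex.I / 2 from rfl,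
        neg_mul, Complex.exp_neg, ← ha_def]
      field_simp [Complex.I_ne_zero]
      ring_nf
      simp [Complex.I_sq]
      try ring
    have hsub : (a - a⁻¹) ^ j = (a ^ 2 - 1) ^ j / a ^ j := by
      have : a - a⁻¹ = (a ^ 2 - 1) / a := by field_simp
      rw [this, div_pow]
    have hak : a ^ (k - j) = a ^ k / a ^ j := by
      rw [pow_sub₀ a ha hj.le, div_eq_mul_inv]
    have hterm : ∀ l : ℕ, Complex.exp (((k - j + 2 * l : ℕ) : ℂ) * Complex.I * θ)
        = a ^ (k - j) * (a ^ 2) ^ l := by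
      intro l
      rw [← pow_mul, ← pow_add, ha_def, ← Complex.exp_nat_mul]
      ring_nf
    have h2 : ((c * Real.sin θ : ℝ) : ℂ) = (c : ℂ) * ((a - a⁻¹) / (2 * Complex.I)) := by
      push_cast
      rw [← Complex.ofReal_sin, hsin]
    have step1 : Complex.exp (Complex.I * k * θ) * ((c * Real.sin θ : ℝ) : ℂ) ^ j
        = ((c : ℂ) ^ j / (2 * Complex.I) ^ j * a ^ (k - j)) * (a ^ 2 - 1) ^ j := by
      rw [h1, h2, mul_pow, div_pow, hsub, hak]
      have h2I : (2 * Complex.I) ^ j ≠ 0 := pow_ne_zero _ (by simp [Complex.I_ne_zero])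
      field_simp
    rw [step1, sub_pow, Finset.mul_sum]
    refine Finset.sum_congr rfl fun l hl => ?_
    rw [hterm l]
    ring
  have cont : ∀ l : ℕ, IntervalIntegrable
      (fun θ : ℝ => ((-1:ℂ)) ^ (l + j) * (j.choose l : ℂ) * c ^ j / (2 * Complex.I) ^ j
        * Complex.exp (((k - j + 2 * l : ℕ) : ℂ) * Complex.I * θ))
      MeasureTheory.volume 0 (2 * Real.pi) := by
    intro l
    apply Continuous.intervalIntegrable
    exact continuous_const.mul ((Complex.continuous_exp.comp (by continuity)))
  rw [intervalIntegral.integral_congr (g := fun θ => ∑ l ∈ Finset.range (j + 1),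
      ((-1:ℂ)) ^ (l + j) * (j.choose l : ℂ) * c ^ j / (2 * Complex.I) ^ j
        * Complex.exp (((k - j + 2 * l : ℕ) : ℂ) * Complex.I * θ)) (fun θ _ => key θ),
    intervalIntegral.integral_finset_sum (fun l _ => cont l)]
  refine Finset.sum_eq_zero fun l hl => ?_
  rw [intervalIntegral.integral_const_mul, expE _ (by omega)]
  simp

lemma Tdeg : ∀ n : ℕ, (Polynomial.Chebyshev.T ℂ (n:ℤ)).natDegree ≤ n := by
  intro n
  induction n using Nat.strong_induction_on with
  | _ n ih =>
    match n with
    | 0 => simp [Polynomial.Chebyshev.T_zero]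
    | 1 => simp [Polynomial.Chebyshev.T_one]
    | (n+2) =>
      have h : Polynomial.Chebyshev.T ℂ ((n:ℤ)+2)
          = 2 * Polynomial.X * Polynomial.Chebyshev.T ℂ ((n:ℤ)+1)
            - Polynomial.Chebyshev.T ℂ (n:ℤ) := Polynomial.Chebyshev.T_add_two ℂ n
      have hcast : ((n+2 : ℕ) : ℤ) = (n:ℤ) + 2 := by push_cast; ring
      rw [hcast, h]
      refine le_trans (Polynomial.natDegree_sub_le _ _) ?_
      have h1 : (2 * Polynomial.X * Polynomial.Chebyshev.T ℂ ((n:ℤ)+1)).natDegree ≤ n + 2 := by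
        refine le_trans (Polynomial.natDegree_mul_le) ?_
        have : ((n+1 : ℕ) : ℤ) = (n:ℤ) + 1 := by push_cast; ring
        have h2 := ih (n+1) (by omega)
        rw [this] at h2
        have h3 : (2 * Polynomial.X : Polynomial ℂ).natDegree ≤ 1 := by
          refine le_trans (Polynomial.natDegree_mul_le) ?_
          simp
        omega
      have h4 := ih n (by omega)
      simp only [sup_le_iff]
      omega

lemma cheb_exp (m : ℕ) (φ : ℝ) :
    Complex.exp ((φ:ℂ) * Complex.I) ^ m + (-1:ℂ)^m * Complex.exp (-(φ:ℂ) * Complex.I) ^ m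
      = 2 * Complex.I ^ m
        * (Polynomial.Chebyshev.T ℂ (m:ℤ)).eval ((Real.sin φ : ℝ) : ℂ) := by
  have key := Polynomial.Chebyshev.T_complex_cos ((Real.pi/2 - φ : ℝ) : ℂ) (m:ℤ)
  have hcos : Complex.cos ((Real.pi/2 - φ : ℝ) : ℂ) = ((Real.sin φ : ℝ) : ℂ) := by
    rw [← Complex.ofReal_cos]
    norm_num [Real.cos_pi_div_two_sub]
  rw [hcos] at key
  rw [key]
  have hc : ∀ z : ℂ, Complex.cos z
      = (Complex.exp (z * Complex.I) + Complex.exp (-z * Complex.I)) / 2 := fun z => rfl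
  rw [hc]
  have hI : Complex.exp ((Real.pi/2 : ℝ) * Complex.I) = Complex.I := by
    rw [Complex.exp_mul_I]
    simp
  have hInv : Complex.exp (-((Real.pi/2 : ℝ) : ℂ) * Complex.I) = -Complex.I := by
    rw [Complex.exp_mul_I]
    simp
  push_cast at hI hInv
  have e1 : Complex.exp (((m:ℤ):ℂ) * ((Real.pi/2 - φ : ℝ) : ℂ) * Complex.I)
      = (Complex.I * Complex.exp (-(φ:ℂ) * Complex.I)) ^ m := by
    push_cast
    rw [mul_assoc, Complex.exp_nat_mul]
    congr 1
    rw [show ((Real.pi:ℂ)/2 - (φ:ℂ)) * Complex.I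
        = (Real.pi:ℂ)/2 * Complex.I + (-(φ:ℂ)) * Complex.I by ring, Complex.exp_add, hI]
  have e2 : Complex.exp (-(((m:ℤ):ℂ) * ((Real.pi/2 - φ : ℝ) : ℂ)) * Complex.I)
      = ((-Complex.I) * Complex.exp ((φ:ℂ) * Complex.I)) ^ m := by
    push_cast
    rw [show -(((m:ℕ):ℂ) * ((Real.pi:ℂ)/2 - (φ:ℂ))) * Complex.I
        = ((m:ℕ):ℂ) * (-(((Real.pi:ℂ)/2 - (φ:ℂ))) * Complex.I) by ring, Complex.exp_nat_mul]
    congr 1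
    rw [show -((Real.pi:ℂ)/2 - (φ:ℂ)) * Complex.I
        = -((Real.pi:ℂ)/2) * Complex.I + (φ:ℂ) * Complex.I by ring, Complex.exp_add, hInv]
  rw [e1, e2]
  have hA : (Complex.I)^m * Complex.I^m = (-1:ℂ)^m := by
    rw [← mul_pow, Complex.I_mul_I]
  have hB : (Complex.I)^m * (-Complex.I)^m = 1 := by
    rw [← mul_pow]
    simp
  calc Complex.exp ((φ:ℂ) * Complex.I) ^ m + (-1:ℂ)^m * Complex.exp (-(φ:ℂ) * Complex.I) ^ m
      = (Complex.I^m * (-Complex.I)^m) * Complex.exp ((φ:ℂ) * Complex.I) ^ m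
        + (Complex.I^m * Complex.I^m) * Complex.exp (-(φ:ℂ) * Complex.I) ^ m := by
        rw [hA, hB]; ring
    _ = 2 * Complex.I ^ m
        * (((Complex.I * Complex.exp (-(φ:ℂ) * Complex.I)) ^ m
          + (-Complex.I * Complex.exp ((φ:ℂ) * Complex.I)) ^ m) / 2) := by
        rw [mul_pow, mul_pow]; ring

lemma L2 (k : ℕ) (c : ℝ) (p : Polynomial ℂ) (hp : p.natDegree < k) :
    ∫ θ in (0:ℝ)..(2 * Real.pi),
      Complex.exp (Complex.I * k * θ) * p.eval ((c * Real.sin θ : ℝ) : ℂ) = 0 := by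
  have key : ∀ θ : ℝ, Complex.exp (Complex.I * k * θ) * p.eval ((c * Real.sin θ : ℝ) : ℂ)
      = ∑ i ∈ Finset.range (p.natDegree + 1),
          p.coeff i * (Complex.exp (Complex.I * k * θ) * ((c * Real.sin θ : ℝ) : ℂ) ^ i) := by
    intro θ
    rw [Polynomial.eval_eq_sum_range, Finset.mul_sum]
    exact Finset.sum_congr rfl fun i _ => by ring
  rw [intervalIntegral.integral_congr (fun θ _ => key θ),
    intervalIntegral.integral_finset_sum (fun i _ => by
      apply Continuous.intervalIntegrable
      fun_prop)]
  refine Finset.sum_eq_zero fun i hi => ?_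
  rw [intervalIntegral.integral_const_mul,
    L1 k i (by simp only [Finset.mem_range] at hi; omega) c, mul_zero]

/-- For all integers `0 ≤ m < k` with `k ≡ m (mod 2)` and every
`ρ ∈ [0,1]`, `∫₀^{2π} e^{ikθ} (√(1 - ρ² sin²θ) + iρ sin θ)^m dθ = 0`. -/
theorem statement12 (k m : ℕ) (hm : m < k) (hpar : k % 2 = m % 2)
    (ρ : ℝ) (h0 : 0 ≤ ρ) (h1 : ρ ≤ 1) :
    ∫ θ in (0:ℝ)..(2 * Real.pi),
        Complex.exp (Complex.I * k * θ) *
          ((Real.sqrt (1 - ρ ^ 2 * Real.sin θ ^ 2) : ℂ)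
            + Complex.I * ((ρ * Real.sin θ : ℝ) : ℂ)) ^ m
      = 0 := by
  set φ : ℝ → ℝ := fun θ => Real.arcsin (ρ * Real.sin θ) with hφ
  have hb : ∀ θ : ℝ, -1 ≤ ρ * Real.sin θ ∧ ρ * Real.sin θ ≤ 1 := by
    intro θ
    constructor
    · nlinarith [Real.neg_one_le_sin θ, Real.sin_le_one θ]
    · nlinarith [Real.neg_one_le_sin θ, Real.sin_le_one θ]
  have hsinφ : ∀ θ : ℝ, Real.sin (φ θ) = ρ * Real.sin θ := fun θ =>
    Real.sin_arcsin (hb θ).1 (hb θ).2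
  have w_eq : ∀ θ : ℝ,
      ((Real.sqrt (1 - ρ ^ 2 * Real.sin θ ^ 2) : ℂ)
        + Complex.I * ((ρ * Real.sin θ : ℝ) : ℂ)) = Complex.exp ((φ θ : ℂ) * Complex.I) := by
    intro θ
    rw [Complex.exp_mul_I, ← Complex.ofReal_cos, ← Complex.ofReal_sin, hsinφ θ,
      hφ, Real.cos_arcsin]
    have : 1 - (ρ * Real.sin θ) ^ 2 = 1 - ρ ^ 2 * Real.sin θ ^ 2 := by ring
    rw [this]
    ring
  -- the two auxiliary functions
  set f : ℝ → ℂ := fun θ => Complex.exp (Complex.I * k * θ)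
      * Complex.exp ((φ θ : ℂ) * Complex.I) ^ m with hf
  set g : ℝ → ℂ := fun θ => Complex.exp (Complex.I * k * θ)
      * Complex.exp (-(φ θ : ℂ) * Complex.I) ^ m with hg
  have hcontφ : Continuous φ := Real.continuous_arcsin.comp (by fun_prop)
  have hcontf : Continuous f := by
    apply Continuous.mul
    · fun_prop
    · exact (Complex.continuous_exp.comp (by fun_prop)).pow m
  have hcontg : Continuous g := by
    apply Continuous.mul
    · fun_prop
    · exact (Complex.continuous_exp.comp (by fun_prop)).pow m
  have hpark : (-1 : ℂ) ^ k = (-1) ^ m := by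
    rcases Nat.even_or_odd k with hk | hk
    · have hmev : Even m := by
        rw [Nat.even_iff] at hk ⊢; omega
      rw [hk.neg_one_pow, hmev.neg_one_pow]
    · have hmod : Odd m := by
        rw [Nat.odd_iff] at hk ⊢; omega
      rw [hk.neg_one_pow, hmod.neg_one_pow]
  have hper : Function.Periodic f (2 * Real.pi) := by
    intro θ
    have h2 : φ (θ + 2 * Real.pi) = φ θ := by
      simp [hφ, Real.sin_add_two_pi]
    simp only [hf, h2]
    congr 1
    push_cast
    rw [show Complex.I * (k:ℂ) * ((θ:ℂ) + 2 * (Real.pi:ℂ))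
        = Complex.I * (k:ℂ) * (θ:ℂ) + ((k:ℤ):ℂ) * (2 * (Real.pi:ℂ) * Complex.I) by
      push_cast; ring, Complex.exp_add, Complex.exp_int_mul_two_pi_mul_I, mul_one]
  have hshift : ∀ θ : ℝ, f (θ + Real.pi) = (-1:ℂ) ^ m * g θ := by
    intro θ
    have h2 : φ (θ + Real.pi) = -φ θ := by
      simp [hφ, Real.sin_add_pi, Real.arcsin_neg]
    simp only [hf, hg, h2]
    have h3 : Complex.exp (Complex.I * k * ((θ + Real.pi : ℝ) : ℂ))
        = (-1:ℂ) ^ k * Complex.exp (Complex.I * k * (θ:ℂ)) := by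
      push_cast
      rw [show Complex.I * (k:ℂ) * ((θ:ℂ) + (Real.pi:ℂ))
          = Complex.I * (k:ℂ) * (θ:ℂ) + (k:ℕ) * ((Real.pi:ℂ) * Complex.I) by ring,
        Complex.exp_add, Complex.exp_nat_mul, Complex.exp_pi_mul_I]
      ring
    rw [h3, hpark]
    push_cast
    ring
  have hJ : ∫ θ in (0:ℝ)..(2 * Real.pi), g θ
      = (-1:ℂ) ^ m * ∫ θ in (0:ℝ)..(2 * Real.pi), f θ := by
    have e1 : ∀ θ : ℝ, g θ = (-1:ℂ) ^ m * f (θ + Real.pi) := by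
      intro θ
      rw [hshift θ, ← mul_assoc, ← mul_pow]
      norm_num
    rw [intervalIntegral.integral_congr (fun θ _ => e1 θ), intervalIntegral.integral_const_mul]
    congr 1
    rw [intervalIntegral.integral_comp_add_right f Real.pi,
      show (0:ℝ) + Real.pi = Real.pi by ring,
      show (2:ℝ) * Real.pi + Real.pi = Real.pi + 2 * Real.pi by ring]
    have h7 := hper.intervalIntegral_add_eq Real.pi 0
    rw [zero_add] at h7
    exact h7
  have hzero : (∫ θ in (0:ℝ)..(2 * Real.pi), f θ)
      + (-1:ℂ) ^ m * ∫ θ in (0:ℝ)..(2 * Real.pi), g θ = 0 := by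
    rw [← intervalIntegral.integral_const_mul,
      ← intervalIntegral.integral_add (hcontf.intervalIntegrable _ _)
        ((hcontg.intervalIntegrable _ _).const_mul _)]
    have e2 : ∀ θ : ℝ, f θ + (-1:ℂ) ^ m * g θ
        = 2 * Complex.I ^ m * (Complex.exp (Complex.I * k * (θ:ℂ))
            * (Polynomial.Chebyshev.T ℂ (m:ℤ)).eval ((ρ * Real.sin θ : ℝ) : ℂ)) := by
      intro θ
      have h4 := cheb_exp m (φ θ)
      rw [hsinφ θ] at h4
      simp only [hf, hg]
      calc Complex.exp (Complex.I * k * (θ:ℂ)) * Complex.exp ((φ θ : ℂ) * Complex.I) ^ m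
            + (-1:ℂ) ^ m * (Complex.exp (Complex.I * k * (θ:ℂ))
                * Complex.exp (-(φ θ : ℂ) * Complex.I) ^ m)
          = Complex.exp (Complex.I * k * (θ:ℂ)) * (Complex.exp ((φ θ : ℂ) * Complex.I) ^ m
              + (-1:ℂ) ^ m * Complex.exp (-(φ θ : ℂ) * Complex.I) ^ m) := by ring
        _ = _ := by rw [h4]; ring
    rw [intervalIntegral.integral_congr (fun θ _ => e2 θ), intervalIntegral.integral_const_mul,
      L2 k ρ _ (lt_of_le_of_lt (Tdeg m) hm), mul_zero]
  have hmain : (∫ θ in (0:ℝ)..(2 * Real.pi), f θ) = 0 := by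
    rw [hJ] at hzero
    have h5 : (2:ℂ) * ∫ θ in (0:ℝ)..(2 * Real.pi), f θ = 0 := by
      rw [← hzero, ← mul_assoc, ← mul_pow]
      norm_num
      ring
    have h6 : (2:ℂ) ≠ 0 := by norm_num
    exact (mul_eq_zero.mp h5).resolve_left h6
  rw [intervalIntegral.integral_congr (g := f) (fun θ _ => by rw [w_eq θ])]
  exact hmain
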